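/- Every element z of the center of U(𝔤𝔩₂(ℚ_p)) acts on ℚ_p[X] through ρ by a scalar: there exists c ∈ ℚ_p with ρ(z) = c·id. If moreover z lies in the ℤ_p-subalgebra of U(𝔤𝔩₂(ℚ_p)) generated by e, h₁, h₂, f, then c ∈ ℤ_p. -/

import Mathlib

/-!
STATEMENT 9: Every element `z` of the center of `U(𝔤𝔩₂(ℚ_p))` acts on
`ℚ_[p][X]` through `ρ` by a scalar: there exists `c ∈ ℚ_[p]` with `ρ(z) = c·id`.
If moreover `z` lies in the `ℤ_[p]`-subalgebra of `U(𝔤𝔩₂(ℚ_p))` generated by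
`e, h₁, h₂, f`, then `c ∈ ℤ_[p]`.

Here `ρ : U(𝔤𝔩₂(ℚ_p)) → End_{ℚ_p}(ℚ_p[X])` is the `ℚ_[p]`-algebra homomorphism
extending the Lie algebra homomorphism with `ρ(e) = ∂`, `ρ(h₁) = −X∂`,
`ρ(h₂) = X∂`, `ρ(f) = −X²∂`.
-/

open UniversalEnvelopingAlgebra

attribute [local instance 100] LieRing.ofAssociativeRing

noncomputable section

/-- `𝔤𝔩₂(ℚ_p)`. -/
abbrev gl2 (p : ℕ) [Fact p.Prime] := Matrix (Fin 2) (Fin 2) ℚ_[p]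

/-- The universal enveloping algebra of `𝔤𝔩₂(ℚ_p)` over `ℚ_[p]`. -/
abbrev Ugl2 (p : ℕ) [Fact p.Prime] := UniversalEnvelopingAlgebra ℚ_[p] (gl2 p)

/-- `e = E₁₂`. -/
def eMat (p : ℕ) [Fact p.Prime] : gl2 p := Matrix.single 0 1 1
/-- `h₁ = E₁₁`. -/
def h1Mat (p : ℕ) [Fact p.Prime] : gl2 p := Matrix.single 0 0 1
/-- `h₂ = E₂₂`. -/
def h2Mat (p : ℕ) [Fact p.Prime] : gl2 p := Matrix.single 1 1 1
/-- `f = E₂₁`. -/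
def fMat (p : ℕ) [Fact p.Prime] : gl2 p := Matrix.single 1 0 1

/-- The images in `U(𝔤)` of the four standard basis elements `e, h₁, h₂, f`. -/
def basisU (p : ℕ) [Fact p.Prime] : Fin 4 → Ugl2 p
  | 0 => ι ℚ_[p] (eMat p)
  | 1 => ι ℚ_[p] (h1Mat p)
  | 2 => ι ℚ_[p] (h2Mat p)
  | 3 => ι ℚ_[p] (fMat p)

/-- The `ℤ_[p]`-subalgebra of `U(𝔤𝔩₂(ℚ_p))` generated by `e, h₁, h₂, f`:
all `ℤ_[p]`-linear combinations of words in `e, h₁, h₂, f`. -/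
def zpSubalg (p : ℕ) [Fact p.Prime] : Set (Ugl2 p) :=
  {u | ∃ (s : Finset (List (Fin 4))) (a : List (Fin 4) → ℤ_[p]),
    u = ∑ w ∈ s, ((a w : ℚ_[p]) • (w.map (basisU p)).prod)}

/-- The derivative `∂ = d/dX` as an endomorphism of `ℚ_[p][X]`. -/
def der (p : ℕ) [Fact p.Prime] : Module.End ℚ_[p] (Polynomial ℚ_[p]) :=
  Polynomial.derivative

/-- Multiplication by `X` as an endomorphism of `ℚ_[p][X]`. -/
def mulX (p : ℕ) [Fact p.Prime] : Module.End ℚ_[p] (Polynomial ℚ_[p]) :=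
  LinearMap.mulLeft ℚ_[p] (Polynomial.X : Polynomial ℚ_[p])

-- ===== auxiliary lemmas =====

section RhoAux

variable (p : ℕ) [Fact p.Prime]

lemma coeff_mulXder (q : Polynomial ℚ_[p]) (m : ℕ) :
    ((mulX p * der p) q).coeff m = (m : ℚ_[p]) * q.coeff m := by
  show ((Polynomial.X : Polynomial ℚ_[p]) * Polynomial.derivative q).coeff m = _
  cases m with
  | zero => simp
  | succ k =>
      rw [Polynomial.coeff_X_mul, Polynomial.coeff_derivative]
      push_cast; ring

lemma mulXder_pow (n : ℕ) :
    (mulX p * der p) (Polynomial.X ^ n : Polynomial ℚ_[p]) = (n : ℚ_[p]) • Polynomial.X ^ n := by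
  ext m
  rw [coeff_mulXder, Polynomial.coeff_smul, Polynomial.coeff_X_pow, smul_eq_mul]
  by_cases h : m = n <;> simp [h]

lemma eigen_eq_smul_pow (q : Polynomial ℚ_[p]) (n : ℕ)
    (hq : (mulX p * der p) q = (n : ℚ_[p]) • q) :
    q = q.coeff n • Polynomial.X ^ n := by
  ext m
  rw [Polynomial.coeff_smul, Polynomial.coeff_X_pow, smul_eq_mul]
  by_cases h : m = n
  · subst h; simp
  · have h1 := congrArg (fun r => Polynomial.coeff r m) hq
    simp only [coeff_mulXder, Polynomial.coeff_smul, smul_eq_mul] at h1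
    have h2 : ((m : ℚ_[p]) - n) * q.coeff m = 0 := by rw [sub_mul, h1, sub_self]
    have h3 : ((m : ℚ_[p]) - n) ≠ 0 := sub_ne_zero.mpr (by exact_mod_cast h)
    simp [h, (mul_eq_zero.mp h2).resolve_left h3]

/-- "integral" polynomials -/
def IsInt (q : Polynomial ℚ_[p]) : Prop := ∀ n, ‖q.coeff n‖ ≤ 1

lemma isInt_der {q : Polynomial ℚ_[p]} (h : IsInt p q) : IsInt p (der p q) := by
  intro n
  show ‖(Polynomial.derivative q).coeff n‖ ≤ 1
  rw [Polynomial.coeff_derivative]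
  calc ‖q.coeff (n+1) * ((n:ℚ_[p])+1)‖ = ‖q.coeff (n+1)‖ * ‖((n:ℚ_[p])+1)‖ := norm_mul _ _
    _ ≤ 1 * 1 := by
        refine mul_le_mul (h _) ?_ (norm_nonneg _) zero_le_one
        have := Padic.norm_int_le_one (p := p) ((n : ℤ) + 1)
        push_cast at this ⊢; exact this
    _ = 1 := one_mul 1

lemma isInt_mulX {q : Polynomial ℚ_[p]} (h : IsInt p q) : IsInt p (mulX p q) := by
  intro n
  show ‖((Polynomial.X : Polynomial ℚ_[p]) * q).coeff n‖ ≤ 1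
  cases n with
  | zero => simp
  | succ k => rw [Polynomial.coeff_X_mul]; exact h k

lemma isInt_neg {q : Polynomial ℚ_[p]} (h : IsInt p q) : IsInt p (-q) := by
  intro n; simpa using h n

lemma isInt_one : IsInt p (1 : Polynomial ℚ_[p]) := by
  intro n
  rw [Polynomial.coeff_one]
  split <;> simp

lemma norm_sum_le_one {α : Type*} (s : Finset α) (g : α → ℚ_[p])
    (h : ∀ x ∈ s, ‖g x‖ ≤ 1) : ‖∑ x ∈ s, g x‖ ≤ 1 := by
  classical
  induction s using Finset.induction_on with
  | empty => simp
  | @insert b s' hb ih =>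
    rw [Finset.sum_insert hb]
    refine le_trans (Padic.nonarchimedean _ _) (max_le (h b (by simp)) ?_)
    exact ih fun x hxs => h x (by simp [hxs])

end RhoAux

theorem rho_center_scalar (p : ℕ) [Fact p.Prime]
    (ρ : Ugl2 p →ₐ[ℚ_[p]] Module.End ℚ_[p] (Polynomial ℚ_[p]))
    (he : ρ (ι ℚ_[p] (eMat p)) = der p)
    (hh1 : ρ (ι ℚ_[p] (h1Mat p)) = -(mulX p * der p))
    (hh2 : ρ (ι ℚ_[p] (h2Mat p)) = mulX p * der p)
    (hf : ρ (ι ℚ_[p] (fMat p)) = -(mulX p ^ 2 * der p)) :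
    ∀ z ∈ Subalgebra.center ℚ_[p] (Ugl2 p),
      ∃ c : ℚ_[p], ρ z = c • (1 : Module.End ℚ_[p] (Polynomial ℚ_[p])) ∧
        (z ∈ zpSubalg p → ∃ y : ℤ_[p], (y : ℚ_[p]) = c) := by
  intro z hz
  set T := ρ z with hT
  have hcomm : ∀ u : Ugl2 p, T * ρ u = ρ u * T := by
    intro u
    rw [hT, ← map_mul, ← map_mul, (Subalgebra.mem_center_iff.mp hz u)]
  have hD : T * (mulX p * der p) = (mulX p * der p) * T := by
    have := hcomm (ι ℚ_[p] (h2Mat p)); rwa [hh2] at this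
  have hd : T * der p = der p * T := by
    have := hcomm (ι ℚ_[p] (eMat p)); rwa [he] at this
  -- eigenvectors
  set c : ℕ → ℚ_[p] := fun n => (T (Polynomial.X ^ n)).coeff n with hc
  have hTX : ∀ n : ℕ, T (Polynomial.X ^ n) = c n • Polynomial.X ^ n := by
    intro n
    apply eigen_eq_smul_pow
    have h1 : (mulX p * der p) (T (Polynomial.X ^ n))
        = T ((mulX p * der p) (Polynomial.X ^ n)) := by
      rw [← Module.End.mul_apply, ← Module.End.mul_apply, hD]
    rw [h1, mulXder_pow, map_smul]
  -- constancy
  have hder : ∀ n : ℕ, der p ((Polynomial.X : Polynomial ℚ_[p]) ^ (n+1))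
      = ((n:ℚ_[p])+1) • Polynomial.X ^ n := by
    intro n
    show Polynomial.derivative _ = _
    rw [Polynomial.derivative_X_pow, Polynomial.smul_eq_C_mul]
    push_cast
    ring_nf
  have hstep : ∀ n : ℕ, c (n + 1) = c n := by
    intro n
    have h1 : der p (T (Polynomial.X ^ (n+1))) = T (der p (Polynomial.X ^ (n+1))) := by
      rw [← Module.End.mul_apply, ← Module.End.mul_apply, hd]
    rw [hTX, map_smul, hder, map_smul, hTX] at h1
    have h2 := congrArg (fun r => Polynomial.coeff r n) h1
    simp only [Polynomial.coeff_smul, smul_eq_mul, Polynomial.coeff_X_pow, if_pos rfl,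
      mul_one, smul_smul] at h2
    have hne : ((n:ℚ_[p])+1) ≠ 0 := by
      have : ((n+1 : ℕ) : ℚ_[p]) ≠ 0 := Nat.cast_ne_zero.mpr (Nat.succ_ne_zero n)
      push_cast at this; exact this
    -- h2 should be c (n+1) * (n+1) = (n+1) * c n (up to arrangement)
    field_simp at h2
    exact h2
  have hcn : ∀ n, c n = c 0 := by
    intro n; induction n with
    | zero => rfl
    | succ k ih => rw [hstep k, ih]
  refine ⟨c 0, ?_, ?_⟩
  · -- scalar
    refine Polynomial.lhom_ext' fun n => LinearMap.ext fun a => ?_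
    simp only [LinearMap.coe_comp, Function.comp_apply, LinearMap.smul_apply,
      Module.End.one_apply]
    rw [← Polynomial.smul_X_eq_monomial, map_smul, hTX, hcn n, smul_comm]
  · -- integrality
    rintro ⟨s, a, hzeq⟩
    have hword : ∀ w : List (Fin 4),
        IsInt p (((w.map (fun i => ρ (basisU p i))).prod) (1 : Polynomial ℚ_[p])) := by
      intro w
      induction w with
      | nil => simpa using isInt_one p
      | cons i l ih =>
        rw [List.map_cons, List.prod_cons, Module.End.mul_apply]
        fin_cases i
        · show IsInt p (ρ (ι ℚ_[p] (eMat p)) _)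
          rw [he]; exact isInt_der p ih
        · show IsInt p (ρ (ι ℚ_[p] (h1Mat p)) _)
          rw [hh1, LinearMap.neg_apply, Module.End.mul_apply]
          exact isInt_neg p (isInt_mulX p (isInt_der p ih))
        · show IsInt p (ρ (ι ℚ_[p] (h2Mat p)) _)
          rw [hh2, Module.End.mul_apply]
          exact isInt_mulX p (isInt_der p ih)
        · show IsInt p (ρ (ι ℚ_[p] (fMat p)) _)
          rw [hf, LinearMap.neg_apply, sq, mul_assoc, Module.End.mul_apply,
            Module.End.mul_apply]
          exact isInt_neg p (isInt_mulX p (isInt_mulX p (isInt_der p ih)))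
    have hT1 : T (1 : Polynomial ℚ_[p])
        = ∑ w ∈ s, (a w : ℚ_[p]) • (((w.map (fun i => ρ (basisU p i))).prod) 1) := by
      rw [hT, hzeq, map_sum]
      rw [LinearMap.sum_apply]
      congr 1
      ext w
      rw [map_smul, map_list_prod, List.map_map]
      rfl
    have hcoe : c 0 = (T (1 : Polynomial ℚ_[p])).coeff 0 := by
      have := hTX 0
      rw [pow_zero] at this
      rw [this]
      simp
    have hnorm : ‖c 0‖ ≤ 1 := by
      rw [hcoe, hT1, Polynomial.finset_sum_coeff]
      apply norm_sum_le_one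
      intro w hw
      rw [Polynomial.coeff_smul, smul_eq_mul, norm_mul]
      calc ‖(a w : ℚ_[p])‖ * ‖_‖ ≤ 1 * 1 :=
            mul_le_mul (PadicInt.norm_le_one (a w)) (hword w 0) (norm_nonneg _) zero_le_one
        _ = 1 := one_mul 1
    exact ⟨⟨c 0, hnorm⟩, rfl⟩


end
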